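/- The 4×4 matrix B = [[0, I₂],[ω²I₂ + L, 2ωJ]], with J = [[0,1],[−1,0]], ω² = √2/16 + 1/32, and L = diag(λ₆, λ₆) where λ₆ = √2/16, has the four eigenvalues ±2^{1/4}/4 ± i√(2+4√2)/8; in particular B has eigenvalues with nonzero real part. -/

import Mathlib

open Matrix Polynomial

/-- The angular velocity `ω` of the square relative equilibrium: `ω² = √2/16 + 1/32`. -/
noncomputable def ω : ℝ := Real.sqrt (Real.sqrt 2/16 + 1/32)

/-- The standard symplectic `2 × 2` rotation matrix `J`. -/
noncomputable def Jmat : Matrix (Fin 2) (Fin 2) ℂ := !![0, 1; -1, 0]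

/-- The eigenvalue `λ₆ = √2/16` of the potential Hessian at the square configuration. -/
noncomputable def lam6 : ℝ := Real.sqrt 2/16

/-- The linearization matrix `B = [[0, I₂], [ω² I₂ + L, 2ω J]]` with `L = diag (λ₆, λ₆)`. -/
noncomputable def Bsq : Matrix (Fin 2 ⊕ Fin 2) (Fin 2 ⊕ Fin 2) ℂ :=
  Matrix.fromBlocks 0 1 (((ω : ℂ)^2 + (lam6 : ℂ)) • (1 : Matrix (Fin 2) (Fin 2) ℂ))
    ((2 * (ω : ℂ)) • Jmat)

section Aux

private lemma charpoly4_aux (a b : ℂ) :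
    (!![0,0,1,0; 0,0,0,1; a,0,0,b; 0,a,-b,0] : Matrix (Fin 4) (Fin 4) ℂ).charpoly
      = X^4 + C (b^2 - 2*a) * X^2 + C (a^2) := by
  rw [Matrix.charpoly]
  simp [Matrix.det_succ_row_zero, Fin.sum_univ_succ, charmatrix_apply, Matrix.diagonal, Fin.succAbove,
    map_ofNat]
  ring

private lemma reindex_Bsq_aux :
    Matrix.reindex finSumFinEquiv finSumFinEquiv Bsq
      = !![0,0,1,0; 0,0,0,1; (ω:ℂ)^2+(lam6:ℂ),0,0,2*(ω:ℂ); 0,(ω:ℂ)^2+(lam6:ℂ),-(2*(ω:ℂ)),0] := by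
  ext i j
  fin_cases i <;> fin_cases j <;>
    norm_num [Bsq, Jmat, Matrix.fromBlocks, finSumFinEquiv, Fin.ext_iff, Matrix.one_apply,
      Fin.addCases, Fin.lt_def, Fin.subNat, Fin.castLT]

private lemma Bsq_charpoly_aux :
    Bsq.charpoly = X^4 + C ((2*(ω:ℂ))^2 - 2*((ω:ℂ)^2+(lam6:ℂ))) * X^2
      + C (((ω:ℂ)^2+(lam6:ℂ))^2) := by
  rw [← Matrix.charpoly_reindex finSumFinEquiv, reindex_Bsq_aux, charpoly4_aux]

private lemma homega_aux : (ω:ℂ)^2 = (Real.sqrt 2 : ℂ)/16 + 1/32 := by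
  have h : (ω:ℝ)^2 = Real.sqrt 2/16 + 1/32 := by
    rw [ω, Real.sq_sqrt]; positivity
  calc (ω:ℂ)^2 = ((ω^2 : ℝ) : ℂ) := by push_cast; ring
  _ = _ := by rw [h]; push_cast; ring

private lemma hlam_aux : (lam6:ℂ) = (Real.sqrt 2 : ℂ)/16 := by
  rw [lam6]; push_cast; ring

private lemma prod4_aux (p q i s : ℂ) (hi : i^2 = -1) (hp : p^2 = s) (hq : q^2 = 2 + 4*s) :
    (X - C (p/4 + i*q/8)) * (X - C (p/4 - i*q/8)) *
    (X - C (-p/4 + i*q/8)) * (X - C (-p/4 - i*q/8))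
      = X^4 + C (1/16 : ℂ) * X^2 + C ((s/8 + 1/32)^2) := by
  apply Polynomial.funext
  intro x
  simp only [eval_mul, eval_sub, eval_add, eval_pow, eval_X, eval_C]
  have hP : (p/4)^2 = s/16 := by linear_combination hp/16
  have hM : i^2*(q/8)^2 = -(1/32) - s/16 := by
    linear_combination (q^2/64) * hi - hq/64
  calc (x - (p/4 + i*q/8)) * (x - (p/4 - i*q/8)) * (x - (-p/4 + i*q/8)) * (x - (-p/4 - i*q/8))
      = (x^2 + ((p/4)^2 - i^2*(q/8)^2))^2 - 4*(p/4)^2*x^2 := by ring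
    _ = (x^2 + (s/16 - (-(1/32) - s/16)))^2 - 4*(s/16)*x^2 := by rw [hP, hM]
    _ = x^4 + 1/16 * x^2 + (s/8 + 1/32)^2 := by ring

private lemma eval_charpoly_Bsq_aux (μ : ℂ) :
    Bsq.charpoly.eval μ
      = (algebraMap ℂ (Matrix (Fin 2 ⊕ Fin 2) (Fin 2 ⊕ Fin 2) ℂ) μ - Bsq).det := by
  rw [Matrix.charpoly, ← Polynomial.coe_evalRingHom, RingHom.map_det]
  congr 1
  ext i j
  by_cases h : i = j
  · subst h
    simp [charmatrix_apply_eq, Matrix.algebraMap_matrix_apply]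
  · simp [charmatrix_apply_ne _ _ _ h, Matrix.algebraMap_matrix_apply, h]

private lemma mem_spectrum_Bsq_aux (μ : ℂ) (h : Bsq.charpoly.eval μ = 0) :
    μ ∈ spectrum ℂ Bsq := by
  rw [spectrum.mem_iff]
  intro hU
  rw [Matrix.isUnit_iff_isUnit_det] at hU
  rw [eval_charpoly_Bsq_aux] at h
  rw [h] at hU
  exact hU.ne_zero rfl

end Aux

/-- The `4 × 4` linearization matrix `B` of the square relative equilibrium along the
eigenspace of `λ₆ = √2/16` has the four eigenvalues `± 2^{1/4}/4 ± i √(2 + 4√2)/8`;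
in particular `B` has eigenvalues with nonzero real part. -/

theorem Bsq_eigenvalues :
    Bsq.charpoly =
      (X - C (((Real.sqrt (Real.sqrt 2) : ℝ) : ℂ)/4
          + Complex.I * ((Real.sqrt (2 + 4*Real.sqrt 2) : ℝ) : ℂ)/8)) *
      (X - C (((Real.sqrt (Real.sqrt 2) : ℝ) : ℂ)/4
          - Complex.I * ((Real.sqrt (2 + 4*Real.sqrt 2) : ℝ) : ℂ)/8)) *
      (X - C (-((Real.sqrt (Real.sqrt 2) : ℝ) : ℂ)/4
          + Complex.I * ((Real.sqrt (2 + 4*Real.sqrt 2) : ℝ) : ℂ)/8)) *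
      (X - C (-((Real.sqrt (Real.sqrt 2) : ℝ) : ℂ)/4
          - Complex.I * ((Real.sqrt (2 + 4*Real.sqrt 2) : ℝ) : ℂ)/8)) ∧
    ∃ μ ∈ spectrum ℂ Bsq, μ.re ≠ 0 := by
  have hp : ((Real.sqrt (Real.sqrt 2) : ℝ) : ℂ)^2 = ((Real.sqrt 2 : ℝ) : ℂ) := by
    norm_cast
    exact Real.sq_sqrt (Real.sqrt_nonneg 2)
  have h2 : Real.sqrt (2 + 4*Real.sqrt 2)^2 = 2 + 4*Real.sqrt 2 :=
    Real.sq_sqrt (by positivity)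
  have hq : ((Real.sqrt (2 + 4*Real.sqrt 2) : ℝ) : ℂ)^2
      = 2 + 4*((Real.sqrt 2 : ℝ) : ℂ) := by
    calc ((Real.sqrt (2 + 4*Real.sqrt 2) : ℝ) : ℂ)^2
        = ((Real.sqrt (2 + 4*Real.sqrt 2)^2 : ℝ) : ℂ) := by push_cast; ring
      _ = ((2 + 4*Real.sqrt 2 : ℝ) : ℂ) := by rw [h2]
      _ = 2 + 4*((Real.sqrt 2 : ℝ) : ℂ) := by push_cast; ring
  have hi : Complex.I^2 = -1 := Complex.I_sq
  have hc1 : (2*(ω:ℂ))^2 - 2*((ω:ℂ)^2+(lam6:ℂ)) = 1/16 := by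
    linear_combination 2*homega_aux - 2*hlam_aux
  have hc2 : ((ω:ℂ)^2+(lam6:ℂ))^2 = (((Real.sqrt 2 : ℝ) : ℂ)/8 + 1/32)^2 := by
    have h : (ω:ℂ)^2+(lam6:ℂ) = ((Real.sqrt 2 : ℝ) : ℂ)/8 + 1/32 := by
      linear_combination homega_aux + hlam_aux
    rw [h]
  have hchar : Bsq.charpoly
      = (X - C (((Real.sqrt (Real.sqrt 2) : ℝ) : ℂ)/4
          + Complex.I * ((Real.sqrt (2 + 4*Real.sqrt 2) : ℝ) : ℂ)/8)) *
        (X - C (((Real.sqrt (Real.sqrt 2) : ℝ) : ℂ)/4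
          - Complex.I * ((Real.sqrt (2 + 4*Real.sqrt 2) : ℝ) : ℂ)/8)) *
        (X - C (-((Real.sqrt (Real.sqrt 2) : ℝ) : ℂ)/4
          + Complex.I * ((Real.sqrt (2 + 4*Real.sqrt 2) : ℝ) : ℂ)/8)) *
        (X - C (-((Real.sqrt (Real.sqrt 2) : ℝ) : ℂ)/4
          - Complex.I * ((Real.sqrt (2 + 4*Real.sqrt 2) : ℝ) : ℂ)/8)) := by
    rw [Bsq_charpoly_aux, hc1, hc2,
      prod4_aux _ _ Complex.I ((Real.sqrt 2 : ℝ) : ℂ) hi hp hq]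
  refine ⟨hchar, ((Real.sqrt (Real.sqrt 2) : ℝ) : ℂ)/4
      + Complex.I * ((Real.sqrt (2 + 4*Real.sqrt 2) : ℝ) : ℂ)/8, ?_, ?_⟩
  · apply mem_spectrum_Bsq_aux
    rw [hchar]
    simp
  · have hre : (((Real.sqrt (Real.sqrt 2) : ℝ) : ℂ)/4
        + Complex.I * ((Real.sqrt (2 + 4*Real.sqrt 2) : ℝ) : ℂ)/8).re
        = Real.sqrt (Real.sqrt 2)/4 := by
      simp [Complex.div_re]
    rw [hre]
    have : 0 < Real.sqrt (Real.sqrt 2) :=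
      Real.sqrt_pos.mpr (Real.sqrt_pos.mpr (by norm_num))
    positivity
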